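/- Matsumoto's conjectured inequality is false: there exist a finite-dimensional real vector space V (one may take V = ℝ²), a Minkowski norm F on V, and nonzero vectors ξ, y ∈ V such that √(g_y(ξ,ξ)) < F(ξ), where g_y is the fundamental tensor of F at y. -/

import Mathlib

noncomputable section MatsumotoAux

namespace MatsumotoAux

open ContinuousLinearMap

abbrev A : ℝ × ℝ →L[ℝ] ℝ := ContinuousLinearMap.fst ℝ ℝ ℝ
abbrev B : ℝ × ℝ →L[ℝ] ℝ := ContinuousLinearMap.snd ℝ ℝ ℝ

def clm (a b : ℝ) : ℝ × ℝ →L[ℝ] ℝ := a • A + b • B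

@[simp] lemma clm_apply (a b : ℝ) (v : ℝ × ℝ) : clm a b v = a * v.1 + b * v.2 := by
  simp [clm]

lemma clm_eq (D : ℝ × ℝ →L[ℝ] ℝ) (a b : ℝ) (h1 : D (1,0) = a) (h2 : D (0,1) = b) :
    D = clm a b := by
  apply ContinuousLinearMap.ext
  intro v
  have hv : v = v.1 • ((1,0) : ℝ × ℝ) + v.2 • ((0,1) : ℝ × ℝ) := by
    apply Prod.ext <;> simp
  rw [hv, map_add, map_smul, map_smul, h1, h2]
  simp [clm]
  ring

def s (p : ℝ × ℝ) : ℝ := p.1 ^ 2 + p.2 ^ 2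

def f (p : ℝ × ℝ) : ℝ := s p + p.1 ^ 4 / (4 * s p)

def g1 (p : ℝ × ℝ) : ℝ := 2 * p.1 + (2 * p.1 ^ 5 + 4 * p.1 ^ 3 * p.2 ^ 2) / (4 * s p ^ 2)
def g2 (p : ℝ × ℝ) : ℝ := 2 * p.2 + (-(2 * p.1 ^ 4 * p.2)) / (4 * s p ^ 2)

def h11 (p : ℝ × ℝ) : ℝ :=
  2 + (2 * p.1 ^ 6 + 6 * p.1 ^ 4 * p.2 ^ 2 + 12 * p.1 ^ 2 * p.2 ^ 4) / (4 * s p ^ 3)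
def h12 (p : ℝ × ℝ) : ℝ := (-(8 * p.1 ^ 3 * p.2 ^ 3)) / (4 * s p ^ 3)
def h22 (p : ℝ × ℝ) : ℝ := 2 + (6 * p.1 ^ 4 * p.2 ^ 2 - 2 * p.1 ^ 6) / (4 * s p ^ 3)

lemma s_pos {p : ℝ × ℝ} (hp : p ≠ 0) : 0 < s p := by
  have h' : ¬(p.1 = 0 ∧ p.2 = 0) := by
    intro ⟨h1, h2⟩; exact hp (Prod.ext h1 h2)
  rcases not_and_or.mp h' with h1 | h2
  · have : 0 < p.1 ^ 2 := by positivity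
    have : 0 ≤ p.2 ^ 2 := sq_nonneg _
    unfold s; linarith
  · have : 0 < p.2 ^ 2 := by positivity
    have : 0 ≤ p.1 ^ 2 := sq_nonneg _
    unfold s; linarith

-- derivative of coordinate powers
lemma hasF_x (m : ℕ) (p : ℝ × ℝ) :
    HasFDerivAt (fun q : ℝ × ℝ => q.1 ^ m) (((m : ℝ) * p.1 ^ (m - 1)) • A) p :=
  (hasDerivAt_pow m p.1).comp_hasFDerivAt p hasFDerivAt_fst

lemma hasF_y (m : ℕ) (p : ℝ × ℝ) :
    HasFDerivAt (fun q : ℝ × ℝ => q.2 ^ m) (((m : ℝ) * p.2 ^ (m - 1)) • B) p :=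
  (hasDerivAt_pow m p.2).comp_hasFDerivAt p hasFDerivAt_snd

lemma hasF_s (p : ℝ × ℝ) : HasFDerivAt s ((2 * p.1) • A + (2 * p.2) • B) p := by
  have := (hasF_x 2 p).add (hasF_y 2 p)
  exact this.congr_fderiv (by simp)

-- generic quotient helper : fun q => N q / D q
lemma hasF_div {N D : ℝ × ℝ → ℝ} {N' D' : ℝ × ℝ →L[ℝ] ℝ} {p : ℝ × ℝ}
    (hN : HasFDerivAt N N' p) (hD : HasFDerivAt D D' p) (h0 : D p ≠ 0) :
    HasFDerivAt (fun q => N q / D q)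
      (N p • ((-((D p) ^ 2)⁻¹) • D') + (D p)⁻¹ • N') p := by
  have hinv : HasFDerivAt (fun q => (D q)⁻¹) ((-((D p) ^ 2)⁻¹) • D') p :=
    (hasDerivAt_inv h0).comp_hasFDerivAt p hD
  have := hN.mul hinv
  rw [show (fun q => N q / D q) = fun q => N q * (D q)⁻¹ from funext fun q => div_eq_mul_inv _ _]
  exact this

lemma hasF_clm {f : ℝ × ℝ → ℝ} {D : ℝ × ℝ →L[ℝ] ℝ} {p : ℝ × ℝ} {a b : ℝ}
    (h : HasFDerivAt f D p) (h1 : D (1,0) = a) (h2 : D (0,1) = b) :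
    HasFDerivAt f (clm a b) p := clm_eq D a b h1 h2 ▸ h

lemma hasF_f {p : ℝ × ℝ} (hp : p ≠ 0) : HasFDerivAt f (clm (g1 p) (g2 p)) p := by
  have hs := (s_pos hp).ne'
  have hden : HasFDerivAt (fun q => 4 * s q) ((4:ℝ) • ((2 * p.1) • A + (2 * p.2) • B)) p :=
    (hasF_s p).const_mul 4
  have h0 : 4 * s p ≠ 0 := by positivity
  have hbig := (hasF_s p).add (hasF_div (hasF_x 4 p) hden h0)
  refine hasF_clm hbig ?_ ?_
  · simp [g1, s]
    unfold s at hs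
    field_simp
    ring
  · simp [g2, s]
    unfold s at hs
    field_simp

lemma hasF_s2 (p : ℝ × ℝ) :
    HasFDerivAt (fun q => 4 * s q ^ 2)
      ((4:ℝ) • (((2:ℝ) * s p ^ 1) • ((2 * p.1) • A + (2 * p.2) • B))) p := by
  have h2 : HasFDerivAt (fun q => s q ^ 2)
      (((2:ℝ) * s p ^ 1) • ((2 * p.1) • A + (2 * p.2) • B)) p := by
    have := (hasDerivAt_pow 2 (s p)).comp_hasFDerivAt p (hasF_s p)
    exact this.congr_fderiv (by simp)
  exact h2.const_mul 4

lemma hasF_g1 {p : ℝ × ℝ} (hp : p ≠ 0) : HasFDerivAt g1 (clm (h11 p) (h12 p)) p := by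
  have hs := (s_pos hp).ne'
  have h0 : 4 * s p ^ 2 ≠ 0 := by positivity
  -- numerator 2 x^5 + 4 x^3 y^2
  have hnum : HasFDerivAt (fun q : ℝ × ℝ => 2 * q.1 ^ 5 + 4 * q.1 ^ 3 * q.2 ^ 2)
      ((2:ℝ) • (((5:ℝ) * p.1 ^ 4) • A) +
        (4:ℝ) • (p.1 ^ 3 • (((2:ℝ) * p.2 ^ 1) • B) + p.2 ^ 2 • (((3:ℝ) * p.1 ^ 2) • A))) p := by
    have ha := ((hasF_x 5 p).const_mul 2)
    have hb := (((hasF_x 3 p).mul (hasF_y 2 p)).const_mul 4)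
    have := ha.add hb
    refine (this.congr_fderiv (by simp)).congr_of_eventuallyEq (Filter.Eventually.of_forall fun q => ?_)
    simp only [Pi.add_apply, Pi.mul_apply]
    ring
  have hlin : HasFDerivAt (fun q : ℝ × ℝ => 2 * q.1) ((2:ℝ) • A) p := by
    have := (hasF_x 1 p).const_mul 2
    simpa using this
  have hbig := hlin.add (hasF_div hnum (hasF_s2 p) h0)
  refine hasF_clm hbig ?_ ?_
  · simp [h11, s]
    unfold s at hs
    field_simp
    ring
  · simp [h12, s]
    unfold s at hs
    field_simp
    ring

lemma hasF_g2 {p : ℝ × ℝ} (hp : p ≠ 0) : HasFDerivAt g2 (clm (h12 p) (h22 p)) p := by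
  have hs := (s_pos hp).ne'
  have h0 : 4 * s p ^ 2 ≠ 0 := by positivity
  -- numerator -(2 x^4 y)
  have hnum : HasFDerivAt (fun q : ℝ × ℝ => -(2 * q.1 ^ 4 * q.2))
      (-((2:ℝ) • (p.1 ^ 4 • B + p.2 • (((4:ℝ) * p.1 ^ 3) • A)))) p := by
    have hb := (((hasF_x 4 p).mul ((hasF_y 1 p))).const_mul 2).neg
    refine (hb.congr_fderiv (by simp)).congr_of_eventuallyEq (Filter.Eventually.of_forall fun q => ?_)
    simp only [Pi.neg_apply, Pi.mul_apply]
    ring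
  have hlin : HasFDerivAt (fun q : ℝ × ℝ => 2 * q.2) ((2:ℝ) • B) p := by
    have := (hasF_y 1 p).const_mul 2
    simpa using this
  have hbig := hlin.add (hasF_div hnum (hasF_s2 p) h0)
  refine hasF_clm hbig ?_ ?_
  · simp [h12, s]
    unfold s at hs
    field_simp
    ring
  · simp [h22, s]
    unfold s at hs
    field_simp
    ring

lemma f_nonneg (p : ℝ × ℝ) : 0 ≤ f p := by
  have h1 : 0 ≤ s p := by unfold s; positivity
  have h2 : 0 ≤ p.1 ^ 4 / (4 * s p) := by positivity
  unfold f; linarith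

lemma f_pos {p : ℝ × ℝ} (hp : p ≠ 0) : 0 < f p := by
  have h1 := s_pos hp
  have h2 : 0 ≤ p.1 ^ 4 / (4 * s p) := by positivity
  unfold f; linarith

lemma f_homog {c : ℝ} (hc : 0 < c) (p : ℝ × ℝ) : f (c • p) = c ^ 2 * f p := by
  have h1 : (c • p).1 = c * p.1 := rfl
  have h2 : (c • p).2 = c * p.2 := rfl
  unfold f s
  rw [h1, h2]
  rcases eq_or_ne (p.1 ^ 2 + p.2 ^ 2) 0 with hz | hz
  · have hx : p.1 = 0 := by nlinarith [sq_nonneg p.1, sq_nonneg p.2]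
    rw [hx]; simp; ring
  · have key : (c * p.1) ^ 4 / (4 * ((c * p.1) ^ 2 + (c * p.2) ^ 2))
        = c ^ 2 * (p.1 ^ 4 / (4 * (p.1 ^ 2 + p.2 ^ 2))) := by
      rw [show (4 : ℝ) * ((c * p.1) ^ 2 + (c * p.2) ^ 2)
            = c ^ 2 * (4 * (p.1 ^ 2 + p.2 ^ 2)) by ring,
          show (c * p.1) ^ 4 = c ^ 2 * (c ^ 2 * p.1 ^ 4) by ring,
          mul_div_mul_left _ _ (by positivity : (c:ℝ) ^ 2 ≠ 0), mul_div_assoc]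
    rw [key]; ring

lemma second_deriv {y : ℝ × ℝ} (hy : y ≠ 0) (v : ℝ × ℝ) :
    fderiv ℝ (fun z => fderiv ℝ f z) y v v
      = (h11 y * v.1 + h12 y * v.2) * v.1 + (h12 y * v.1 + h22 y * v.2) * v.2 := by
  have hev : (fun z => fderiv ℝ f z) =ᶠ[nhds y] (fun z => clm (g1 z) (g2 z)) := by
    filter_upwards [isOpen_compl_singleton.mem_nhds hy] with z hz
    exact (hasF_f hz).fderiv
  rw [hev.fderiv_eq]
  have hD : HasFDerivAt (fun z => clm (g1 z) (g2 z))
      ((clm (h11 y) (h12 y)).smulRight A + (clm (h12 y) (h22 y)).smulRight B) y := by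
    have h1 := (hasF_g1 hy).smul_const A
    have h2 := (hasF_g2 hy).smul_const B
    exact h1.add h2
  rw [hD.fderiv]
  simp

lemma form_pos {y v : ℝ × ℝ} (hy : y ≠ 0) (hv : v ≠ 0) :
    0 < (1 / 2 : ℝ) * ((h11 y * v.1 + h12 y * v.2) * v.1 + (h12 y * v.1 + h22 y * v.2) * v.2) := by
  have hs := s_pos hy
  have hvp := s_pos hv
  unfold s at hs hvp
  set x := y.1; set z := y.2; set u := v.1; set w := v.2
  have hrw : (1 / 2 : ℝ) * ((h11 y * u + h12 y * w) * u + (h12 y * u + h22 y * w) * w)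
      = (8 * (x ^ 2 + z ^ 2) ^ 3 * (u ^ 2 + w ^ 2)
          + (2 * x ^ 6 + 6 * x ^ 4 * z ^ 2 + 12 * x ^ 2 * z ^ 4) * u ^ 2
          - 16 * x ^ 3 * z ^ 3 * u * w
          + (6 * x ^ 4 * z ^ 2 - 2 * x ^ 6) * w ^ 2) / (8 * (x ^ 2 + z ^ 2) ^ 3) := by
    unfold h11 h12 h22 s
    have hs' : y.1 ^ 2 + y.2 ^ 2 ≠ 0 := hs.ne'
    field_simp
    ring
  rw [hrw]
  apply div_pos
  · have hkey : (0:ℝ) < 6 * (x ^ 2 + z ^ 2) ^ 3 * (u ^ 2 + w ^ 2) := by positivity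
    nlinarith [hkey, sq_nonneg (x ^ 2 * z * u - x * z ^ 2 * w), sq_nonneg (u * x ^ 3),
      sq_nonneg (u * x ^ 2 * z), sq_nonneg (u * x * z ^ 2), sq_nonneg (u * z ^ 3),
      sq_nonneg (w * x ^ 2 * z - w * z ^ 3), sq_nonneg (w * x ^ 2 * z), sq_nonneg (w * z ^ 3)]
  · positivity

lemma contDiffOn_F : ContDiffOn ℝ 2 (fun p => Real.sqrt (f p)) {(0 : ℝ × ℝ)}ᶜ := by
  intro p hp
  have hp' : p ≠ 0 := hp
  have hs := (s_pos hp').ne'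
  have hfc : ContDiffAt ℝ 2 f p := by
    have hsc : ContDiffAt ℝ 2 s p := by
      apply ContDiffAt.add <;> exact ContDiffAt.pow (by fun_prop) 2
    have hden : ContDiffAt ℝ 2 (fun q => 4 * s q) p := contDiffAt_const.mul hsc
    have hnum : ContDiffAt ℝ 2 (fun q : ℝ × ℝ => q.1 ^ 4) p := ContDiffAt.pow (by fun_prop) 4
    have h0 : 4 * s p ≠ 0 := by positivity
    exact hsc.add (hnum.div hden h0)
  exact (hfc.sqrt (f_pos hp').ne').contDiffWithinAt

end MatsumotoAux

open MatsumotoAux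

theorem matsumoto_conjecture_false :
    ∃ F : ℝ × ℝ → ℝ,
      (∀ (c : ℝ) (y : ℝ × ℝ), 0 < c → F (c • y) = c * F y) ∧
      (∀ y : ℝ × ℝ, y ≠ 0 → 0 < F y) ∧
      ContDiffOn ℝ 2 F {(0 : ℝ × ℝ)}ᶜ ∧
      (∀ y : ℝ × ℝ, y ≠ 0 → ∀ v : ℝ × ℝ, v ≠ 0 →
        0 < (1 / 2) * fderiv ℝ (fun z => fderiv ℝ (fun w => F w ^ 2) z) y v v) ∧
      ∃ ξ y : ℝ × ℝ, ξ ≠ 0 ∧ y ≠ 0 ∧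
        Real.sqrt ((1 / 2) * fderiv ℝ (fun z => fderiv ℝ (fun w => F w ^ 2) z) y ξ ξ)
          < F ξ := by
  refine ⟨fun p => Real.sqrt (f p), ?_, ?_, contDiffOn_F, ?_, ?_⟩
  · intro c y hc
    show Real.sqrt (f (c • y)) = c * Real.sqrt (f y)
    rw [f_homog hc, Real.sqrt_mul (by positivity), Real.sqrt_sq hc.le]
  · intro y hy
    exact Real.sqrt_pos.mpr (f_pos hy)
  · have hFf : (fun w => Real.sqrt (f w) ^ 2) = f := funext fun w => Real.sq_sqrt (f_nonneg w)
    rw [hFf]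
    intro y hy v hv
    rw [second_deriv hy v]
    exact form_pos hy hv
  · have hFf : (fun w => Real.sqrt (f w) ^ 2) = f := funext fun w => Real.sq_sqrt (f_nonneg w)
    rw [hFf]
    refine ⟨(1, 0), (0, 1), ?_, ?_, ?_⟩
    · simp [Prod.ext_iff]
    · simp [Prod.ext_iff]
    · have h01 : ((0, 1) : ℝ × ℝ) ≠ 0 := by simp [Prod.ext_iff]
      rw [second_deriv h01 (1, 0)]
      have e11 : h11 (0, 1) = 2 := by norm_num [h11, s]
      have e12 : h12 (0, 1) = 0 := by norm_num [h12, s]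
      have e22 : h22 (0, 1) = 2 := by norm_num [h22, s]
      rw [e11, e12, e22]
      show Real.sqrt _ < Real.sqrt (f (1, 0))
      have hface : f (1, 0) = 5 / 4 := by norm_num [f, s]
      rw [hface]
      norm_num
      have h4 : Real.sqrt 4 = 2 := by
        rw [show (4:ℝ) = 2 ^ 2 by norm_num, Real.sqrt_sq (by norm_num : (0:ℝ) ≤ 2)]
      rw [lt_div_iff₀ (by norm_num : (0:ℝ) < 2), one_mul]
      rw [show (2:ℝ) = Real.sqrt 4 by rw [h4]]
      exact Real.sqrt_lt_sqrt (by norm_num) (by norm_num)
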